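/- arXiv:2103.03725 — 7 statements merged into one kernel-verified Lean document; each statement's English description precedes it below -/
import Mathlib

section
/- The negative gradient of the PCN free energy F = Σ_{l=0}^{l_max−1} Σ_i (1/2)(ε^l_i)² with respect to a hidden value node x^l_i (for 0 < l < l_max) equals −ε^l_i + f'(x^l_i)·Σ_{k=1}^{n^{l-1}} ε^{l-1}_k θ^l_{k,i}, where ε^l_i = x^l_i − Σ_j θ^{l+1}_{i,j} f(x^{l+1}_j). -/
/-- PCN prediction `μ^l_i = ∑_j θ^{l+1}_{i,j} f(x^{l+1}_j)`. -/
noncomputable def mu (n : ℕ → ℕ) (θ : ℕ → ℕ → ℕ → ℝ) (f : ℝ → ℝ)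
    (x : ℕ → ℕ → ℝ) (l i : ℕ) : ℝ :=
  ∑ j ∈ Finset.range (n (l + 1)), θ (l + 1) i j * f (x (l + 1) j)

/-- PCN free energy `F = ∑_{l=0}^{l_max−1} ∑_i (1/2)(ε^l_i)^2` with `ε^l_i = x^l_i − μ^l_i`. -/
noncomputable def freeEnergy (L : ℕ) (n : ℕ → ℕ) (θ : ℕ → ℕ → ℕ → ℝ) (f : ℝ → ℝ)
    (x : ℕ → ℕ → ℝ) : ℝ :=
  ∑ l ∈ Finset.range L, ∑ i ∈ Finset.range (n l),
    (1 / 2) * (x l i - mu n θ f x l i) ^ 2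

/-- Update the value node at position `(l, i)` to the value `z`. -/
def updX (x : ℕ → ℕ → ℝ) (l i : ℕ) (z : ℝ) : ℕ → ℕ → ℝ :=
  fun l' i' => if l' = l ∧ i' = i then z else x l' i'

/-- the negative gradient of `F` with respect to a hidden value node
`x^l_i` (for `0 < l < l_max`) equals `−ε^l_i + f'(x^l_i)·∑_k ε^{l-1}_k θ^l_{k,i}`. -/
theorem pcn_inference_gradient
    (L : ℕ) (n : ℕ → ℕ) (θ : ℕ → ℕ → ℕ → ℝ) (f : ℝ → ℝ) (hf : Differentiable ℝ f)
    (x : ℕ → ℕ → ℝ) (l i : ℕ) (hl0 : 0 < l) (hlL : l < L) (hi : i < n l) :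
    - deriv (fun z => freeEnergy L n θ f (updX x l i z)) (x l i)
      = -(x l i - mu n θ f x l i)
        + deriv f (x l i) *
          ∑ k ∈ Finset.range (n (l - 1)), (x (l - 1) k - mu n θ f x (l - 1) k) * θ l k i := by
  have hl1 : l - 1 + 1 = l := Nat.succ_pred_eq_of_pos hl0
  have hll1 : ¬ (l = l - 1) := by omega
  have hne1 : ¬ (l - 1 = l) := by omega
  have hupd_ne : ∀ (z : ℝ) (l'' i'' : ℕ), l'' ≠ l → updX x l i z l'' i'' = x l'' i'' := by
    intro z l'' i'' h
    simp [updX, h]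
  have hmu_ne : ∀ (z : ℝ) (l' i' : ℕ), l' + 1 ≠ l →
      mu n θ f (updX x l i z) l' i' = mu n θ f x l' i' := by
    intro z l' i' h
    unfold mu
    exact Finset.sum_congr rfl fun j _ => by rw [hupd_ne z _ j h]
  set D : ℕ → ℕ → ℝ := fun l' i' =>
    if l' = l ∧ i' = i then x l i - mu n θ f x l i
    else if l' = l - 1 then
      -((x (l-1) i' - mu n θ f x (l-1) i') * (θ l i' i * deriv f (x l i)))
    else 0 with hD
  have hterm : ∀ l' ∈ Finset.range L, ∀ i' ∈ Finset.range (n l'),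
      HasDerivAt (fun z => (1/2 : ℝ) * (updX x l i z l' i' - mu n θ f (updX x l i z) l' i')^2)
        (D l' i') (x l i) := by
    intro l' _ i' _
    by_cases hcase : l' = l - 1
    · subst hcase
      have hx : ∀ z : ℝ, updX x l i z (l-1) i' = x (l-1) i' :=
        fun z => hupd_ne z _ _ (by omega)
      have hmu' : ∀ z : ℝ, mu n θ f (updX x l i z) (l-1) i'
          = ∑ j ∈ Finset.range (n l), θ l i' j * f (if j = i then z else x l j) := by
        intro z
        unfold mu
        rw [hl1]
        refine Finset.sum_congr rfl fun j _ => ?_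
        simp [updX]
      have hg : HasDerivAt
          (fun z => ∑ j ∈ Finset.range (n l), θ l i' j * f (if j = i then z else x l j))
          (θ l i' i * deriv f (x l i)) (x l i) := by
        have h := HasDerivAt.fun_sum (u := Finset.range (n l))
          (A := fun j z => θ l i' j * f (if j = i then z else x l j))
          (A' := fun j => if j = i then θ l i' i * deriv f (x l i) else 0) (x := x l i) ?_
        · simpa [Finset.sum_ite_eq', Finset.mem_range.2 hi] using h
        · intro j _
          by_cases hj : j = i
          · subst hj
            simpa using ((hf (x l j)).hasDerivAt.const_mul (θ l i' j))
          · simp only [if_neg hj]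
            exact hasDerivAt_const _ _
      have hgval : (∑ j ∈ Finset.range (n l), θ l i' j * f (if j = i then x l i else x l j))
          = mu n θ f x (l-1) i' := by
        unfold mu
        rw [hl1]
        refine Finset.sum_congr rfl fun j _ => ?_
        by_cases hj : j = i <;> simp [hj]
      have h1 : HasDerivAt (fun z => (1/2 : ℝ) *
          (x (l-1) i' - ∑ j ∈ Finset.range (n l), θ l i' j * f (if j = i then z else x l j))^2)
          (D (l-1) i') (x l i) := by
        have h2 := ((hg.const_sub (x (l-1) i')).pow 2).const_mul (1/2 : ℝ)
        convert h2 using 1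
        case e'_4 => rfl
        case e'_5 => rfl
        case e'_8 => rfl
        simp only [hD]
        rw [if_neg (fun h => hne1 h.1)]
        simp only [if_true]
        rw [hgval]
        push_cast
        ring
      simpa only [hx, hmu'] using h1
    · have hmu'' : ∀ z : ℝ, mu n θ f (updX x l i z) l' i' = mu n θ f x l' i' :=
        fun z => hmu_ne z l' i' (by omega)
      by_cases h1 : l' = l
      · by_cases h2 : i' = i
        · have hx : ∀ z : ℝ, updX x l i z l' i' = z := by
            intro z; simp [updX, h1, h2]
          have h3 : HasDerivAt (fun z : ℝ => (1/2 : ℝ) * (z - mu n θ f x l' i')^2)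
              (D l' i') (x l i) := by
            have h4 := (((hasDerivAt_id (x l i)).sub_const (mu n θ f x l' i')).pow 2).const_mul
              (1/2 : ℝ)
            convert h4 using 1
            case e'_4 => rfl
            case e'_5 => rfl
            case e'_8 => rfl
            simp only [hD]
            rw [if_pos ⟨h1, h2⟩, h1, h2]
            push_cast
            simp only [id_eq]
            ring
          simpa only [hx, hmu''] using h3
        · have hx : ∀ z : ℝ, updX x l i z l' i' = x l' i' := by
            intro z; simp [updX, h2]
          have h3 : D l' i' = 0 := by
            simp only [hD]
            rw [if_neg (fun h => h2 h.2), h1, if_neg hll1]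
          rw [h3]
          simpa only [hx, hmu''] using
            hasDerivAt_const (x l i) ((1/2 : ℝ) * (x l' i' - mu n θ f x l' i')^2)
      · have hx : ∀ z : ℝ, updX x l i z l' i' = x l' i' := fun z => hupd_ne z _ _ h1
        have h3 : D l' i' = 0 := by
          simp only [hD]
          rw [if_neg (fun h => h1 h.1), if_neg hcase]
        rw [h3]
        simpa only [hx, hmu''] using
          hasDerivAt_const (x l i) ((1/2 : ℝ) * (x l' i' - mu n θ f x l' i')^2)
  have hsum : HasDerivAt (fun z => freeEnergy L n θ f (updX x l i z))
      (∑ l' ∈ Finset.range L, ∑ i' ∈ Finset.range (n l'), D l' i') (x l i) := by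
    unfold freeEnergy
    exact HasDerivAt.fun_sum fun l' hl' => HasDerivAt.fun_sum fun i' hi' =>
      by simpa using hterm l' hl' i' hi'
  have hval : (∑ l' ∈ Finset.range L, ∑ i' ∈ Finset.range (n l'), D l' i')
      = (x l i - mu n θ f x l i)
        - deriv f (x l i) *
          ∑ k ∈ Finset.range (n (l - 1)), (x (l - 1) k - mu n θ f x (l - 1) k) * θ l k i := by
    have hinner : ∀ l' ∈ Finset.range L, (∑ i' ∈ Finset.range (n l'), D l' i')
        = (if l' = l then x l i - mu n θ f x l i else 0)
          + (if l' = l - 1 then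
              -(deriv f (x l i) *
                ∑ k ∈ Finset.range (n (l - 1)), (x (l - 1) k - mu n θ f x (l - 1) k) * θ l k i)
            else 0) := by
      intro l' _
      by_cases h1 : l' = l
      · rw [if_pos h1, if_neg (by omega), add_zero]
        have heq : ∀ i' ∈ Finset.range (n l'),
            D l' i' = if i' = i then x l i - mu n θ f x l i else 0 := by
          intro i' _
          simp only [hD]
          by_cases h : i' = i
          · rw [if_pos ⟨h1, h⟩, if_pos h]
          · rw [if_neg (fun hh => h hh.2), h1, if_neg hll1, if_neg h]
        rw [Finset.sum_congr rfl heq, Finset.sum_ite_eq' _ i,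
          if_pos (Finset.mem_range.2 (h1 ▸ hi))]
      · rw [if_neg h1, zero_add]
        by_cases h2 : l' = l - 1
        · subst h2
          rw [if_pos rfl]
          have heq : ∀ i' ∈ Finset.range (n (l-1)),
              D (l-1) i'
                = -((x (l-1) i' - mu n θ f x (l-1) i') * (θ l i' i * deriv f (x l i))) := by
            intro i' _
            simp only [hD]
            rw [if_neg (fun hh => hne1 hh.1)]
            simp only [if_true]
          rw [Finset.sum_congr rfl heq, Finset.mul_sum, ← Finset.sum_neg_distrib]
          exact Finset.sum_congr rfl fun k _ => by ring
        · rw [if_neg h2]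
          refine Finset.sum_eq_zero fun i' _ => ?_
          simp only [hD]
          rw [if_neg (fun hh => h1 hh.1), if_neg h2]
    rw [Finset.sum_congr rfl hinner, Finset.sum_add_distrib,
      Finset.sum_ite_eq' _ l, Finset.sum_ite_eq' _ (l-1),
      if_pos (Finset.mem_range.2 hlL), if_pos (Finset.mem_range.2 (by omega : l - 1 < L))]
    ring
  rw [hsum.deriv, hval]
  ring
end

section
/- (Zero-propagation lemma) In a PCN trained with Z-IL with initial condition ε^l_{i,0} = 0 for all l > 0 and fixed boundary layers x^{l_max}_t = s^in, x^0_t = s^out, the value nodes of layer l remain at their initial state for all inference times t < l; formally x^l_{i,t} = x^l_{i,0}, ε^l_{i,t} = 0, and μ^{l-1}_{i,t} = μ^{l-1}_{i,0} for all 1 ≤ l ≤ l_max − 1 and t < l. -/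
/-- zero-propagation lemma: in Z-IL with `ε^l_{i,0} = 0` for `l > 0`
and clamped boundary layers, for every hidden layer `1 ≤ l ≤ l_max − 1` and every
inference time `t < l`: `x^l_{i,t} = x^l_{i,0}`, `ε^l_{i,t} = 0`, and
`μ^{l-1}_{i,t} = μ^{l-1}_{i,0}`.
Here `X t l i` is the value node of layer `l`, neuron `i`, at inference time `t`. -/
theorem zero_propagation
    (L : ℕ) (n : ℕ → ℕ) (θ : ℕ → ℕ → ℕ → ℝ) (f : ℝ → ℝ) (hf : Differentiable ℝ f)
    (sIn sOut : ℕ → ℝ) (γ : ℝ) (X : ℕ → ℕ → ℕ → ℝ)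
    (hclampIn : ∀ t i, X t L i = sIn i)
    (hclampOut : ∀ t i, X t 0 i = sOut i)
    (hdyn : ∀ t, ∀ l, 0 < l → l < L → ∀ i,
      X (t + 1) l i = X t l i + γ *
        (-(X t l i - mu n θ f (X t) l i) +
          deriv f (X t l i) *
            ∑ k ∈ Finset.range (n (l - 1)),
              (X t (l - 1) k - mu n θ f (X t) (l - 1) k) * θ l k i))
    (hinit : ∀ l, 1 ≤ l → l ≤ L - 1 → ∀ i, X 0 l i = mu n θ f (X 0) l i) :
    ∀ l, 1 ≤ l → l ≤ L - 1 → ∀ t < l, ∀ i,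
      X t l i = X 0 l i ∧
      X t l i - mu n θ f (X t) l i = 0 ∧
      mu n θ f (X t) (l - 1) i = mu n θ f (X 0) (l - 1) i := by

  have key : ∀ t, ∀ l, t < l → l ≤ L - 1 → ∀ i, X t l i = X 0 l i := by
    intro t
    induction t with
    | zero => intro l _ _ i; rfl
    | succ t ih =>
      intro l hl hlL i
      have hl1 : 1 ≤ l := by omega
      rw [hdyn t l (by omega) (by omega) i]
      have hxl : ∀ j, X t l j = X 0 l j := fun j => ih l (by omega) hlL j
      have hxlp : ∀ j, X t (l + 1) j = X 0 (l + 1) j := by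
        intro j
        by_cases h : l + 1 ≤ L - 1
        · exact ih (l + 1) (by omega) h j
        · have hL : l + 1 = L := by omega
          rw [hL, hclampIn, hclampIn]
      have hxlm : ∀ j, X t (l - 1) j = X 0 (l - 1) j :=
        fun j => ih (l - 1) (by omega) (by omega) j
      have hmul : mu n θ f (X t) l i = mu n θ f (X 0) l i := by
        unfold mu; exact Finset.sum_congr rfl (fun j _ => by rw [hxlp j])
      have hmulm : ∀ k, mu n θ f (X t) (l - 1) k = mu n θ f (X 0) (l - 1) k := by
        intro k; unfold mu
        have h1 : l - 1 + 1 = l := by omega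
        rw [h1]; exact Finset.sum_congr rfl (fun j _ => by rw [hxl j])
      have he : X t l i - mu n θ f (X t) l i = 0 := by
        rw [hxl i, hmul, hinit l hl1 hlL i]; ring
      have hsum : (∑ k ∈ Finset.range (n (l - 1)),
          (X t (l - 1) k - mu n θ f (X t) (l - 1) k) * θ l k i) = 0 := by
        refine Finset.sum_eq_zero (fun k _ => ?_)
        rw [hxlm k, hmulm k, hinit (l - 1) (by omega) (by omega) k]; ring
      rw [he, hsum, hxl i]; ring
  intro l h1 h2 t ht i
  have hxl : ∀ j, X t l j = X 0 l j := fun j => key t l ht h2 j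
  have hxlp : ∀ j, X t (l + 1) j = X 0 (l + 1) j := by
    intro j
    by_cases h : l + 1 ≤ L - 1
    · exact key t (l + 1) (by omega) h j
    · have hL : l + 1 = L := by omega
      rw [hL, hclampIn, hclampIn]
  have hmul : mu n θ f (X t) l i = mu n θ f (X 0) l i := by
    unfold mu; exact Finset.sum_congr rfl (fun j _ => by rw [hxlp j])
  refine ⟨hxl i, ?_, ?_⟩
  · rw [hxl i, hmul, hinit l h1 h2 i]; ring
  · unfold mu
    have h1' : l - 1 + 1 = l := by omega
    rw [h1']; exact Finset.sum_congr rfl (fun j _ => by rw [hxl j])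
end

section
/- In a PCN running Z-IL inference with γ = 1 and ε^l_{i,0} = 0 for l > 0, the prediction error at layer l and inference time t = l satisfies ε^l_{i,l} = f'(μ^l_{i,0}) · Σ_{k=1}^{n^{l-1}} ε^{l-1}_{k,l-1} θ^l_{k,i} for 1 ≤ l ≤ l_max − 1. -/
/-- in Z-IL inference with `γ = 1` and `ε^l_{i,0} = 0` for `l > 0`,
the prediction error at layer `l`, inference time `t = l` satisfies
`ε^l_{i,l} = f'(μ^l_{i,0}) · ∑_k ε^{l-1}_{k,l-1} θ^l_{k,i}` for `1 ≤ l ≤ l_max − 1`. -/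
theorem zil_error_recursion
    (L : ℕ) (n : ℕ → ℕ) (θ : ℕ → ℕ → ℕ → ℝ) (f : ℝ → ℝ) (hf : Differentiable ℝ f)
    (sIn sOut : ℕ → ℝ) (γ : ℝ) (hγ : γ = 1) (X : ℕ → ℕ → ℕ → ℝ)
    (hclampIn : ∀ t i, X t L i = sIn i)
    (hclampOut : ∀ t i, X t 0 i = sOut i)
    (hdyn : ∀ t, ∀ l, 0 < l → l < L → ∀ i,
      X (t + 1) l i = X t l i + γ *
        (-(X t l i - mu n θ f (X t) l i) +
          deriv f (X t l i) *
            ∑ k ∈ Finset.range (n (l - 1)),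
              (X t (l - 1) k - mu n θ f (X t) (l - 1) k) * θ l k i))
    (hinit : ∀ l, 1 ≤ l → l ≤ L - 1 → ∀ i, X 0 l i = mu n θ f (X 0) l i) :
    ∀ l, 1 ≤ l → l ≤ L - 1 → ∀ i,
      X l l i - mu n θ f (X l) l i
        = deriv f (mu n θ f (X 0) l i) *
            ∑ k ∈ Finset.range (n (l - 1)),
              (X (l - 1) (l - 1) k - mu n θ f (X (l - 1)) (l - 1) k) * θ l k i := by
  subst hγ
  -- Zero-propagation: states at interior layer `l` are unchanged before time `l`.
  have hC : ∀ t, ∀ l, 1 ≤ l → l ≤ L - 1 → t < l → ∀ i, X t l i = X 0 l i := by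
    intro t
    induction t with
    | zero => intro l _ _ _ i; rfl
    | succ t ih =>
      -- errors are zero at time `t` for layers above `t`
      have hB : ∀ l, 1 ≤ l → l ≤ L - 1 → t < l → ∀ i,
          X t l i = mu n θ f (X t) l i := by
        intro l h1 h2 h3 i
        have hx : X t l i = X 0 l i := ih l h1 h2 h3 i
        have hmu : mu n θ f (X t) l i = mu n θ f (X 0) l i := by
          unfold mu
          refine Finset.sum_congr rfl fun j _ => ?_
          by_cases hlL : l + 1 = L
          · rw [hlL, hclampIn, hclampIn]
          · rw [ih (l + 1) (by omega) (by omega) (by omega) j]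
        rw [hx, hmu, ← hinit l h1 h2 i]
      intro l h1 h2 h3 i
      have hdyn' := hdyn t l (by omega) (by omega) i
      have e1 : X t l i - mu n θ f (X t) l i = 0 := by
        rw [← hB l h1 h2 (by omega) i]; ring
      have e2 : ∀ k ∈ Finset.range (n (l - 1)),
          (X t (l - 1) k - mu n θ f (X t) (l - 1) k) * θ l k i = 0 := by
        intro k _
        rw [← hB (l - 1) (by omega) (by omega) (by omega) k]; ring
      rw [hdyn', e1, Finset.sum_eq_zero e2, ih l h1 h2 (by omega) i]; ring
  -- errors are zero at time `t` for layers above `t`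
  have hB : ∀ t, ∀ l, 1 ≤ l → l ≤ L - 1 → t < l → ∀ i,
      X t l i = mu n θ f (X t) l i := by
    intro t l h1 h2 h3 i
    have hx : X t l i = X 0 l i := hC t l h1 h2 h3 i
    have hmu : mu n θ f (X t) l i = mu n θ f (X 0) l i := by
      unfold mu
      refine Finset.sum_congr rfl fun j _ => ?_
      by_cases hlL : l + 1 = L
      · rw [hlL, hclampIn, hclampIn]
      · rw [hC t (l + 1) (by omega) (by omega) (by omega) j]
    rw [hx, hmu, ← hinit l h1 h2 i]
  intro l h1 h2 i
  have hstep := hdyn (l - 1) l (by omega) (by omega) i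
  have hl : l - 1 + 1 = l := by omega
  rw [hl] at hstep
  have e1 : X (l - 1) l i - mu n θ f (X (l - 1)) l i = 0 := by
    rw [← hB (l - 1) l h1 h2 (by omega) i]; ring
  have harg : X (l - 1) l i = mu n θ f (X 0) l i := by
    rw [hC (l - 1) l h1 h2 (by omega) i]; exact hinit l h1 h2 i
  have hmu2 : mu n θ f (X l) l i = mu n θ f (X (l - 1)) l i := by
    unfold mu
    refine Finset.sum_congr rfl fun j _ => ?_
    by_cases hlL : l + 1 = L
    · rw [hlL, hclampIn, hclampIn]
    · rw [hC l (l + 1) (by omega) (by omega) (by omega) j,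
        hC (l - 1) (l + 1) (by omega) (by omega) (by omega) j]
  rw [hstep, hmu2, harg]; ring
end

section
/- If γ ≠ 1 but all other Z-IL conditions hold (ε^l_{i,0} = 0 for l > 0, layer-l update at time t = l), then the PCN error at time t = l satisfies ε^l_{i,l} = γ^l · δ^l_i for all layers l, where δ^l_i are the BP error terms of the corresponding ANN with identical weights; consequently the Z-IL weight update equals γ^l times the BP weight update at layer l. -/
/-- if `γ ≠ 1` but all other Z-IL conditions hold, then
`ε^l_{i,l} = γ^l · δ^l_i` for every layer `l`, where `δ` are the BP error terms of
the corresponding ANN with identical weights (`w = θ`, `y^l_i = μ^l_{i,0}`,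
`y^{l_max} = s^in = x^{l_max}_{·,0}`); consequently the Z-IL weight update
`α ε^l_{i,l} f(x^{l+1}_{j,l})` equals `γ^l` times the BP update `α δ^l_i f(y^{l+1}_j)`. -/
theorem zil_gamma_scaling
    (L : ℕ) (n : ℕ → ℕ) (θ : ℕ → ℕ → ℕ → ℝ) (f : ℝ → ℝ) (hf : Differentiable ℝ f)
    (sIn sOut : ℕ → ℝ) (α γ : ℝ) (hγ : γ ≠ 1) (X : ℕ → ℕ → ℕ → ℝ)
    (hclampIn : ∀ t i, X t L i = sIn i)
    (hclampOut : ∀ t i, X t 0 i = sOut i)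
    (hdyn : ∀ t, ∀ l, 0 < l → l < L → ∀ i,
      X (t + 1) l i = X t l i + γ *
        (-(X t l i - mu n θ f (X t) l i) +
          deriv f (X t l i) *
            ∑ k ∈ Finset.range (n (l - 1)),
              (X t (l - 1) k - mu n θ f (X t) (l - 1) k) * θ l k i))
    (hinit : ∀ l, 1 ≤ l → l ≤ L - 1 → ∀ i, X 0 l i = mu n θ f (X 0) l i)
    (δ : ℕ → ℕ → ℝ)
    (hδ0 : ∀ i, δ 0 i = sOut i - mu n θ f (X 0) 0 i)
    (hδS : ∀ l, 0 < l → l < L → ∀ i,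
      δ l i = deriv f (mu n θ f (X 0) l i) *
        ∑ k ∈ Finset.range (n (l - 1)), δ (l - 1) k * θ l k i) :
    ∀ l ≤ L - 1, ∀ i,
      (X l l i - mu n θ f (X l) l i = γ ^ l * δ l i) ∧
      ∀ j, α * (X l l i - mu n θ f (X l) l i) * f (X l (l + 1) j)
             = γ ^ l * (α * δ l i * f (X 0 (l + 1) j)) := by
  have muCong : ∀ (x y : ℕ → ℕ → ℝ) (l i : ℕ), (∀ j, x (l+1) j = y (l+1) j) →
      mu n θ f x l i = mu n θ f y l i := by
    intro x y l i h
    unfold mu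
    exact Finset.sum_congr rfl (fun j _ => by rw [h j])
  have key : ∀ t, (∀ l, t < l → l ≤ L → ∀ i, X t l i = X 0 l i) ∧
      (t ≤ L - 1 → ∀ i, X t t i - mu n θ f (X t) t i = γ ^ t * δ t i) := by
    intro t
    induction t with
    | zero =>
      refine ⟨fun l _ _ i => rfl, fun _ i => ?_⟩
      rw [hclampOut, hδ0]; ring
    | succ t ih =>
      obtain ⟨ih1, ih2⟩ := ih
      -- errors vanish above layer t at time t
      have hzero : ∀ l, t < l → 1 ≤ l → l ≤ L - 1 → ∀ i,
          X t l i - mu n θ f (X t) l i = 0 := by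
        intro l hl h1 h2 i
        have hL : 1 ≤ L := le_trans h1 (le_trans h2 (Nat.sub_le L 1))
        rw [ih1 l hl (le_trans h2 (Nat.sub_le L 1)) i,
          muCong (X t) (X 0) l i (fun j => ih1 (l+1) (by omega) (by omega) j),
          hinit l h1 h2 i]
        ring
      have h1' : ∀ l, t + 1 < l → l ≤ L → ∀ i, X (t+1) l i = X 0 l i := by
        intro l hl hL i
        rcases eq_or_lt_of_le hL with hEq | hlt
        · rw [hEq, hclampIn, hclampIn]
        · have h1 : 0 < l := by omega
          rw [hdyn t l h1 hlt i, hzero l (by omega) h1 (by omega) i]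
          have hsum : ∀ k ∈ Finset.range (n (l-1)),
              (X t (l - 1) k - mu n θ f (X t) (l - 1) k) * θ l k i = 0 := by
            intro k _
            rw [hzero (l-1) (by omega) (by omega) (by omega) k]; ring
          rw [Finset.sum_congr rfl hsum, Finset.sum_const, smul_zero]
          rw [ih1 l (by omega) hL i]; ring
      refine ⟨h1', fun hLe i => ?_⟩
      have hlt : t + 1 < L := by omega
      have hXt : X t (t+1) i = X 0 (t+1) i := ih1 (t+1) (by omega) (by omega) i
      have hmu : mu n θ f (X (t+1)) (t+1) i = mu n θ f (X 0) (t+1) i :=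
        muCong _ _ _ _ (fun j => h1' (t+2) (by omega) (by omega) j)
      have hinit' : X 0 (t+1) i = mu n θ f (X 0) (t+1) i :=
        hinit (t+1) (by omega) (by omega) i
      have hdyn' := hdyn t (t+1) (by omega) hlt i
      simp only [Nat.add_sub_cancel] at hdyn'
      rw [hzero (t+1) (by omega) (by omega) (by omega) i] at hdyn'
      have hsum : ∀ k ∈ Finset.range (n t),
          (X t t k - mu n θ f (X t) t k) * θ (t+1) k i
            = γ ^ t * (δ t k * θ (t+1) k i) := by
        intro k _
        rw [ih2 (by omega) k]; ring
      rw [Finset.sum_congr rfl hsum, ← Finset.mul_sum] at hdyn'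
      have hδ := hδS (t+1) (by omega) hlt i
      simp only [Nat.add_sub_cancel] at hδ
      rw [hdyn', hmu, hXt, hinit', hδ]
      ring
  intro l hl i
  obtain ⟨k1, k2⟩ := key l
  have hε := k2 hl i
  refine ⟨hε, fun j => ?_⟩
  have hX : X l (l+1) j = X 0 (l+1) j := by
    rcases Nat.eq_zero_or_pos l with h0 | h0
    · subst h0; rfl
    · exact k1 (l+1) (by omega) (by omega) j
  rw [hε, hX]; ring
end

section
/- In Z-IL inference, the error at layer l at time l equals the increment of the value node at time l−1: ε^l_{i,l} = Δx^l_{i,l-1}, for 1 ≤ l ≤ l_max − 1, assuming ε^l_{i,0} = 0 for l > 0. -/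
/-- in Z-IL inference (with `ε^l_{i,0} = 0` for `l > 0`), the error at
layer `l` at time `l` equals the increment of the value node at time `l − 1`:
`ε^l_{i,l} = Δx^l_{i,l-1} = x^l_{i,l} − x^l_{i,l-1}`, for `1 ≤ l ≤ l_max − 1`. -/
theorem zil_error_equals_increment
    (L : ℕ) (n : ℕ → ℕ) (θ : ℕ → ℕ → ℕ → ℝ) (f : ℝ → ℝ) (hf : Differentiable ℝ f)
    (sIn sOut : ℕ → ℝ) (γ : ℝ) (X : ℕ → ℕ → ℕ → ℝ)
    (hclampIn : ∀ t i, X t L i = sIn i)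
    (hclampOut : ∀ t i, X t 0 i = sOut i)
    (hdyn : ∀ t, ∀ l, 0 < l → l < L → ∀ i,
      X (t + 1) l i = X t l i + γ *
        (-(X t l i - mu n θ f (X t) l i) +
          deriv f (X t l i) *
            ∑ k ∈ Finset.range (n (l - 1)),
              (X t (l - 1) k - mu n θ f (X t) (l - 1) k) * θ l k i))
    (hinit : ∀ l, 1 ≤ l → l ≤ L - 1 → ∀ i, X 0 l i = mu n θ f (X 0) l i) :
    ∀ l, 1 ≤ l → l ≤ L - 1 → ∀ i,
      X l l i - mu n θ f (X l) l i = X l l i - X (l - 1) l i := by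
  -- congruence for mu
  have hmu : ∀ t m, (∀ j, X t (m + 1) j = X 0 (m + 1) j) →
      ∀ i, mu n θ f (X t) m i = mu n θ f (X 0) m i := by
    intro t m h i
    unfold mu
    exact Finset.sum_congr rfl (fun j _ => by rw [h j])
  -- zero-propagation: layers above t are unchanged at time t
  have key : ∀ t, ∀ m, t + 1 ≤ m → m ≤ L → ∀ i, X t m i = X 0 m i := by
    intro t
    induction t with
    | zero => intro m _ _ i; rfl
    | succ t ih =>
      intro m hm hmL i
      rcases eq_or_lt_of_le hmL with hml | hml
      · subst hml; rw [hclampIn, hclampIn]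
      have hm0 : 0 < m := by omega
      rw [hdyn t m hm0 hml i]
      have hXm : ∀ j, X t m j = X 0 m j := fun j => ih m (by omega) (by omega) j
      have hXm1 : ∀ j, X t (m + 1) j = X 0 (m + 1) j := by
        intro j
        rcases eq_or_lt_of_le (show m + 1 ≤ L from hml) with h | h
        · rw [show _ + 1 = L from h, hclampIn, hclampIn]
        · exact ih (m + 1) (by omega) (by omega) j
      have hXm2 : ∀ j, X t (m - 1 + 1) j = X 0 (m - 1 + 1) j := by
        have : m - 1 + 1 = m := by omega
        rw [this]; exact hXm
      have he1 : X t m i - mu n θ f (X t) m i = 0 := by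
        rw [hXm i, hmu t m hXm1 i, ← hinit m (by omega) (by omega) i]
        ring
      have he2 : ∀ k, X t (m - 1) k - mu n θ f (X t) (m - 1) k = 0 := by
        intro k
        rw [ih (m - 1) (by omega) (by omega) k, hmu t (m - 1) hXm2 k,
          ← hinit (m - 1) (by omega) (by omega) k]
        ring
      have hsum : ∑ k ∈ Finset.range (n (m - 1)),
          (X t (m - 1) k - mu n θ f (X t) (m - 1) k) * θ m k i = 0 := by
        apply Finset.sum_eq_zero
        intro k _
        rw [he2 k]; ring
      rw [he1, hsum, hXm i]; ring
  intro l hl hlL i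
  have h1 : ∀ j, X l (l + 1) j = X 0 (l + 1) j := by
    intro j
    rcases eq_or_lt_of_le (show l + 1 ≤ L by omega) with h | h
    · rw [show _ + 1 = L from h, hclampIn, hclampIn]
    · exact key l (l + 1) (by omega) (by omega) j
  have h2 : X (l - 1) l i = X 0 l i := key (l - 1) l (by omega) (by omega) i
  rw [hmu l l h1 i, ← hinit l hl hlL i, h2]
end

section
/- For a feedforward PCN in the prediction phase (no output clamping), the configuration x^l_i = μ^l_i for all l < l_max (with x^{l_max} = s^in) is a global minimum of the free energy F, with F = 0, and at this configuration the value nodes equal the feedforward activations of the corresponding ANN with the same weights: x^l_i = y^l_i for all l. -/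
/-- for a feedforward PCN in the prediction phase (input clamped to
`s^in`, no output clamping), the configuration with `x^l_i = μ^l_i` for all `l < l_max`
is a global minimum of the free energy among input-clamped configurations, with
`F = 0`, and there the value nodes equal the feedforward activations of the
corresponding ANN with the same weights: `x^l_i = y^l_i` for all `l`. -/
theorem pcn_prediction_fixed_point
    (L : ℕ) (n : ℕ → ℕ) (θ : ℕ → ℕ → ℕ → ℝ) (f : ℝ → ℝ) (hf : Differentiable ℝ f)
    (sIn : ℕ → ℝ) (x y : ℕ → ℕ → ℝ)
    (hxL : ∀ i, x L i = sIn i)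
    (hx : ∀ l < L, ∀ i, x l i = mu n θ f x l i)
    (hyL : ∀ i, y L i = sIn i)
    (hyRec : ∀ l < L, ∀ i,
      y l i = ∑ j ∈ Finset.range (n (l + 1)), θ (l + 1) i j * f (y (l + 1) j)) :
    freeEnergy L n θ f x = 0 ∧
    (∀ x' : ℕ → ℕ → ℝ, (∀ i, x' L i = sIn i) →
      freeEnergy L n θ f x ≤ freeEnergy L n θ f x') ∧
    (∀ l ≤ L, ∀ i, x l i = y l i) := by
  have hF : freeEnergy L n θ f x = 0 := by
    unfold freeEnergy
    apply Finset.sum_eq_zero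
    intro l hl
    apply Finset.sum_eq_zero
    intro i _
    rw [← hx l (Finset.mem_range.mp hl) i]
    ring
  refine ⟨hF, ?_, ?_⟩
  · intro x' _
    rw [hF]
    unfold freeEnergy
    apply Finset.sum_nonneg
    intro l _
    apply Finset.sum_nonneg
    intro i _
    positivity
  · intro l hl
    induction' hd : L - l with k ih generalizing l
    · have : l = L := by omega
      intro i; rw [this, hxL, hyL]
    · have hlt : l < L := by omega
      intro i
      rw [hx l hlt i, hyRec l hlt i]
      unfold mu
      refine Finset.sum_congr rfl fun j _ => ?_
      rw [ih (l+1) (by omega) (by omega) j]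
end

section
/- In Z-IL with γ = 1 and zero initial hidden errors, the output-layer error is constant for all inference times t ≤ l_max − 1 at which weight updates occur before the hidden value nodes below have changed; in particular ε^0_{i,t} = ε^0_{i,0} = s^out_i − μ^0_{i,0} for all t < 1, and more generally layer-0's error used in the update of θ^1 at time t = 0 equals s^out_i − y^0_i, the BP output error δ^0_i. -/
/-- in Z-IL with `γ = 1` and zero initial hidden errors (output clamped
to `s^out`), the output-layer error is constant before the hidden value nodes below
have changed: `ε^0_{i,t} = ε^0_{i,0} = s^out_i − μ^0_{i,0}` for all `t < 1`; and the
layer-0 error used in the update of `θ^1` at time `t = 0` equals the BP output error: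
`ε^0_{i,0} = s^out_i − y^0_i = δ^0_i`, where `y` is the feedforward pass of the
corresponding ANN with identical weights. -/
theorem zil_output_error
    (L : ℕ) (hL : 0 < L) (n : ℕ → ℕ) (θ : ℕ → ℕ → ℕ → ℝ) (f : ℝ → ℝ)
    (hf : Differentiable ℝ f)
    (sIn sOut : ℕ → ℝ) (γ : ℝ) (hγ : γ = 1) (X : ℕ → ℕ → ℕ → ℝ)
    (hclampIn : ∀ t i, X t L i = sIn i)
    (hclampOut : ∀ t i, X t 0 i = sOut i)
    (hdyn : ∀ t, ∀ l, 0 < l → l < L → ∀ i,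
      X (t + 1) l i = X t l i + γ *
        (-(X t l i - mu n θ f (X t) l i) +
          deriv f (X t l i) *
            ∑ k ∈ Finset.range (n (l - 1)),
              (X t (l - 1) k - mu n θ f (X t) (l - 1) k) * θ l k i))
    (hinit : ∀ l, 1 ≤ l → l ≤ L - 1 → ∀ i, X 0 l i = mu n θ f (X 0) l i)
    (y : ℕ → ℕ → ℝ)
    (hyL : ∀ i, y L i = sIn i)
    (hyRec : ∀ l < L, ∀ i,
      y l i = ∑ j ∈ Finset.range (n (l + 1)), θ (l + 1) i j * f (y (l + 1) j)) :
    (∀ t < 1, ∀ i, X t 0 i - mu n θ f (X t) 0 i = X 0 0 i - mu n θ f (X 0) 0 i) ∧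
    (∀ i, X 0 0 i - mu n θ f (X 0) 0 i = sOut i - mu n θ f (X 0) 0 i) ∧
    (∀ i, X 0 0 i - mu n θ f (X 0) 0 i = sOut i - y 0 i) := by
  -- Key: X 0 agrees with the feedforward pass y on all layers ≥ 1.
  have key : ∀ d, d ≤ L - 1 → ∀ i, X 0 (L - d) i = y (L - d) i := by
    intro d
    induction d with
    | zero =>
      intro _ i
      simpa using (hclampIn 0 i).trans (hyL i).symm
    | succ d ih =>
      intro hd i
      have hd' : d ≤ L - 1 := by omega
      have hl1 : 1 ≤ L - (d + 1) := by omega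
      have hl2 : L - (d + 1) ≤ L - 1 := by omega
      have hlt : L - (d + 1) < L := by omega
      have hsucc : L - (d + 1) + 1 = L - d := by omega
      rw [hinit _ hl1 hl2 i, hyRec _ hlt i, mu]
      rw [hsucc]
      exact Finset.sum_congr rfl fun j _ => by rw [ih hd' j]
  have hmu0 : ∀ i, mu n θ f (X 0) 0 i = y 0 i := by
    intro i
    rw [hyRec 0 hL i, mu]
    refine Finset.sum_congr rfl fun j _ => ?_
    have h1 : L - (L - 1) = 1 := by omega
    have := key (L - 1) le_rfl
    rw [h1] at this
    rw [this j]
  refine ⟨?_, ?_, ?_⟩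
  · intro t ht i
    interval_cases t
    rfl
  · intro i
    rw [hclampOut 0 i]
  · intro i
    rw [hclampOut 0 i, hmu0 i]
end
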